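/- Let s : ℕ → ℕ be strictly increasing and let G be a collection of finite subsets of ℕ closed under subsets (if P ∈ G and P' ⊆ P then P' ∈ G). Suppose that for every n there is a partition {s(0), s(1), …, s(n-1)} = P ∪ Q with P ∩ Q = ∅, P ∈ G and Q ∈ G. Then there is an infinite set S' ⊆ range(s) such that every finite subset of S' belongs to G. -/

import Mathlib

/-- König's lemma core of the nonemptiness of the restricted solution class: if every
initial segment of the range of `s` admits a partition into two pieces from a
subset-closed collection `G` of finite sets, then some infinite subset of the range
of `s` has all its finite subsets in `G`. -/
theorem infinite_subset_with_finite_subsets_in_G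
    (s : ℕ → ℕ) (hs : StrictMono s) (G : Set (Finset ℕ))
    (hG : ∀ P ∈ G, ∀ P' ⊆ P, P' ∈ G)
    (h : ∀ n : ℕ, ∃ P Q : Finset ℕ,
      P ∪ Q = (Finset.range n).image s ∧ Disjoint P Q ∧ P ∈ G ∧ Q ∈ G) :
    ∃ S' : Set ℕ, S'.Infinite ∧ S' ⊆ Set.range s ∧
      ∀ F : Finset ℕ, ↑F ⊆ S' → F ∈ G := by
  classical
  choose P Q hPQ hdisj hPG hQG using h
  set U : Ultrafilter ℕ := Ultrafilter.of Filter.atTop with hUdef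
  have hU : ↑U ≤ (Filter.atTop : Filter ℕ) := Ultrafilter.of_le _
  set T : Bool → ℕ → Finset ℕ := fun b n => if b then P n else Q n with hT
  have hTG : ∀ b n, T b n ∈ G := by intro b n; cases b <;> simp [hT, hPG, hQG]
  have key : ∀ i, ∃ b, {n | s i ∈ T b n} ∈ U := by
    intro i
    by_cases hb : {n | s i ∈ P n} ∈ U
    · exact ⟨true, by simpa [hT] using hb⟩
    · refine ⟨false, ?_⟩
      have h1 : {n | s i ∈ P n}ᶜ ∈ U := Ultrafilter.compl_mem_iff_notMem.2 hb
      have h2 : {n | i < n} ∈ U := hU (Filter.eventually_gt_atTop i)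
      filter_upwards [h1, h2] with n hn1 hn2
      have hmem : s i ∈ P n ∪ Q n := by
        rw [hPQ n]; exact Finset.mem_image_of_mem s (Finset.mem_range.2 hn2)
      simp only [hT, if_false, Set.mem_setOf_eq, Bool.false_eq_true, ite_false]
      rcases Finset.mem_union.1 hmem with hp | hq
      · exact absurd hp hn1
      · exact hq
  choose c hc using key
  have hinf : ∃ b, {i | c i = b}.Infinite := by
    by_contra hcon
    push_neg at hcon
    have h1 := (hcon true)
    have h2 := (hcon false)
    have hsub : (Set.univ : Set ℕ) ⊆ {i | c i = true} ∪ {i | c i = false} := by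
      intro i _; cases hci : c i <;> simp [hci]
    exact Set.infinite_univ ((h1.union h2).subset hsub)
  obtain ⟨b, hbinf⟩ := hinf
  refine ⟨s '' {i | c i = b}, hbinf.image hs.injective.injOn,
    Set.image_subset_range s _, ?_⟩
  intro F hF
  have hx : ∀ x ∈ F, {n | x ∈ T b n} ∈ U := by
    intro x hxF
    rcases hF hxF with ⟨i, hi, hix⟩
    have h3 := hc i
    rw [Set.mem_setOf_eq] at hi
    rw [hi, hix] at h3
    exact h3
  have hmem : (⋂ x ∈ F, {n | x ∈ T b n}) ∈ U :=
    (Filter.biInter_finset_mem F).2 hx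
  obtain ⟨n, hn⟩ := Filter.nonempty_of_mem hmem
  refine hG (T b n) (hTG b n) F ?_
  intro x hxF
  have := Set.mem_iInter₂.1 hn x hxF
  exact this
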